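/- Let α be the real root of x³ − x² − 1 and a = α²/(α³ + 2). For integers n ≥ 1, m1, m2 ≥ 1 and digits d1 ∈ {1,...,9}, d2 ∈ {0,...,9}, we have a·α^n ≠ ((d1·10^{m1} − (d1 − d2))/9)·10^{m2}. -/
import Mathlib

open Polynomial

noncomputable def Pq : ℚ[X] := X^3 - X^2 - 1

lemma Pq_monic : Pq.Monic := by
  unfold Pq
  monicity!

lemma Pq_natDegree : Pq.natDegree = 3 := by
  unfold Pq
  compute_degree!

lemma Pq_no_root (q : ℚ) : ¬ (aeval q Pq = 0) := by
  intro h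
  have h' : q ^ 3 - q ^ 2 - 1 = 0 := by simpa [Pq] using h
  have hz : aeval q ((X:ℤ[X])^3 - X^2 - 1) = 0 := by
    push_cast [map_sub, map_pow, aeval_X, map_one]
    simpa using h'
  have hm : ((X:ℤ[X])^3 - X^2 - 1).Monic := by monicity!
  obtain ⟨r, hr, hdvd⟩ := exists_integer_of_is_root_of_monic hm hz
  have hc : ((X:ℤ[X])^3 - X^2 - 1).coeff 0 = -1 := by
    simp [coeff_sub, coeff_X_pow, coeff_one]
  rw [hc] at hdvd
  have h1 : r ∣ 1 := dvd_neg.mp hdvd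
  rcases Int.isUnit_iff.mp (isUnit_of_dvd_one h1) with rfl | rfl <;>
    rw [hr] at h' <;> norm_num at h'

lemma Pq_irred : Irreducible Pq := by
  rw [irreducible_iff_roots_eq_zero_of_degree_le_three (by rw [Pq_natDegree]; norm_num) (by rw [Pq_natDegree])]
  rw [Multiset.eq_zero_iff_forall_notMem]
  intro q hq
  rw [mem_roots (Pq_monic.ne_zero)] at hq
  exact Pq_no_root q (by simpa [aeval_def] using hq)

lemma lin_indep (α : ℝ) (hα : α ^ 3 = α ^ 2 + 1) (c0 c1 c2 : ℚ)
    (h : (c0 : ℝ) + c1 * α + c2 * α ^ 2 = 0) : c0 = 0 ∧ c1 = 0 ∧ c2 = 0 := by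
  have haev : aeval α Pq = 0 := by
    simp only [Pq, map_sub, map_pow, aeval_X, map_one]
    rw [hα]; ring
  have hmin : minpoly ℚ α = Pq := (minpoly.eq_of_irreducible_of_monic Pq_irred haev Pq_monic).symm
  set Q : ℚ[X] := C c0 + C c1 * X + C c2 * X ^ 2 with hQdef
  have hQ : aeval α Q = 0 := by
    simp only [hQdef, map_add, map_mul, map_pow, aeval_X, aeval_C]
    simpa using h
  have hQ0 : Q = 0 := by
    by_contra hne
    have hle := minpoly.degree_le_of_ne_zero ℚ α hne hQ
    rw [hmin] at hle
    have hdeg : Pq.degree = 3 := by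
      rw [degree_eq_natDegree Pq_monic.ne_zero, Pq_natDegree]; rfl
    have hQdeg : Q.degree ≤ 2 := by
      apply le_trans (degree_add_le _ _)
      apply sup_le
      · apply le_trans (degree_add_le _ _)
        apply sup_le
        · exact le_trans (degree_C_le) (by norm_num)
        · exact le_trans (degree_mul_le _ _) (by
            calc (C c1).degree + (X : ℚ[X]).degree ≤ 0 + 1 := add_le_add degree_C_le degree_X_le
            _ ≤ 2 := by norm_num)
      · exact le_trans (degree_mul_le _ _) (by
          calc (C c2).degree + (X ^ 2 : ℚ[X]).degree ≤ 0 + 2 := add_le_add degree_C_le (degree_X_pow_le 2)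
          _ ≤ 2 := by norm_num)
    rw [hdeg] at hle
    have := le_trans hle hQdeg
    norm_num at this
  refine ⟨?_, ?_, ?_⟩
  · have := congrArg (fun p => Polynomial.coeff p 0) hQ0
    simpa [hQdef, coeff_C, coeff_X, coeff_X_pow] using this
  · have := congrArg (fun p => Polynomial.coeff p 1) hQ0
    simpa [hQdef, coeff_C, coeff_X, coeff_X_pow] using this
  · have := congrArg (fun p => Polynomial.coeff p 2) hQ0
    simpa [hQdef, coeff_C, coeff_X, coeff_X_pow] using this

def tri : ℕ → ℤ × ℤ × ℤ
  | 0 => (1, 0, 0)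
  | k + 1 => ((tri k).2.2, (tri k).1, (tri k).2.1 + (tri k).2.2)

lemma tri_pow (α : ℝ) (hα : α ^ 3 = α ^ 2 + 1) :
    ∀ k, α ^ k = ((tri k).1 : ℝ) + (tri k).2.1 * α + (tri k).2.2 * α ^ 2 := by
  intro k
  induction k with
  | zero => simp [tri]
  | succ k ih =>
    rw [pow_succ, ih, tri]
    push_cast
    linear_combination ((tri k).2.2 : ℝ) * hα

lemma tri_nonneg : ∀ k, 0 ≤ (tri k).1 ∧ 0 ≤ (tri k).2.1 ∧ 0 ≤ (tri k).2.2 := by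
  intro k
  induction k with
  | zero => simp [tri]
  | succ k ih =>
    simp only [tri]
    exact ⟨ih.2.2, ih.1, by linarith [ih.2.1, ih.2.2]⟩

lemma tri_C_pos : ∀ k, 2 ≤ k → 1 ≤ (tri k).2.2 := by
  intro k
  induction k with
  | zero => omega
  | succ k ih =>
    intro hk
    rcases Nat.lt_or_ge k 2 with h | h
    · interval_cases k
      · omega
      · simp [tri]
    · have := ih h
      have hn := (tri_nonneg k).2.1
      show 1 ≤ (tri k).2.1 + (tri k).2.2
      linarith

lemma tri_B_pos (k : ℕ) (hk : 4 ≤ k) : 1 ≤ (tri k).2.1 := by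
  obtain ⟨j, rfl⟩ : ∃ j, k = j + 2 := ⟨k - 2, by omega⟩
  show 1 ≤ (tri (j+1)).1
  show 1 ≤ (tri j).2.2
  exact tri_C_pos j (by omega)

/-- Nonvanishing of the second linear form. -/
theorem lambda_two_nonzero (α : ℝ) (hα : α ^ 3 = α ^ 2 + 1)
    (a : ℝ) (ha : a = α ^ 2 / (α ^ 3 + 2))
    (n m1 m2 d1 d2 : ℕ) (hn : 1 ≤ n) (hm1 : 1 ≤ m1) (hm2 : 1 ≤ m2)
    (hd1 : 1 ≤ d1) (hd1' : d1 ≤ 9) (hd2 : d2 ≤ 9) :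
    a * α ^ n ≠ (((d1 : ℝ) * 10 ^ m1 - ((d1 : ℝ) - (d2 : ℝ))) / 9) * 10 ^ m2 := by
  intro h
  set q : ℚ := (((d1 : ℚ) * 10 ^ m1 - ((d1 : ℚ) - (d2 : ℚ))) / 9) * 10 ^ m2 with hqdef
  have hq : (q : ℝ) = (((d1 : ℝ) * 10 ^ m1 - ((d1 : ℝ) - (d2 : ℝ))) / 9) * 10 ^ m2 := by
    push_cast [hqdef]; ring
  have h3 : α ^ 3 + 2 = α ^ 2 + 3 := by rw [hα]; ring
  have hpos : (0 : ℝ) < α ^ 2 + 3 := by positivity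
  rw [ha, h3, ← hq, div_mul_eq_mul_div, div_eq_iff hpos.ne'] at h
  have key : α ^ (n + 2) = (q : ℝ) * (α ^ 2 + 3) := by
    rw [pow_add]; linarith [h]
  set k := n + 2 with hk
  obtain ⟨A, B, C, hABC⟩ : ∃ A B C : ℤ, tri k = (A, B, C) := ⟨_, _, _, rfl⟩
  have hpow := tri_pow α hα k
  rw [hABC] at hpow
  simp only at hpow
  have hlin := lin_indep α hα ((A : ℚ) - 3 * q) (B : ℚ) ((C : ℚ) - q)
    (by push_cast; linarith [hpow, key])
  have hB : B = 0 := by exact_mod_cast hlin.2.1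
  have hA : (A : ℚ) = 3 * q := by linarith [hlin.1]
  have hC : (C : ℚ) = q := by linarith [hlin.2.2]
  have hAC : A = 3 * C := by
    have : (A : ℚ) = 3 * (C : ℚ) := by rw [hA, hC]
    exact_mod_cast this
  rcases Nat.lt_or_ge n 2 with h2 | h2
  · have hn1 : n = 1 := by omega
    have hk3 : k = 3 := by omega
    rw [hk3] at hABC
    have ht3 : tri 3 = (1, 0, 1) := rfl
    rw [ht3] at hABC
    have := hABC
    simp only [Prod.mk.injEq] at this
    omega
  · have hk4 : 4 ≤ k := by omega
    have := tri_B_pos k hk4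
    rw [hABC] at this
    simp only at this
    omega
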